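/- An element h ∈ X_N lies in the range of 𝓛 if and only if the vector A^N · Σ_{i=0}^{N−1} A^{−(i+1)} h(i) belongs to the orthogonal complement in ℝ² of Ker((I − A^N)ᵀ). -/

import Mathlib

open Matrix

lemma mulVec_finset_sum {m n ι : Type*} [Fintype n] (M : Matrix m n ℝ)
    (s : Finset ι) (f : ι → n → ℝ) :
    M *ᵥ (∑ i ∈ s, f i) = ∑ i ∈ s, M *ᵥ f i := by
  exact map_sum M.mulVecLin f s

lemma surj_of_orth {n : Type*} [Fintype n] [DecidableEq n]
    (M : Matrix n n ℝ) (w : n → ℝ)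
    (H : ∀ v, Mᵀ *ᵥ v = 0 → w ⬝ᵥ v = 0) : ∃ x, M *ᵥ x = w := by
  let e := WithLp.linearEquiv 2 ℝ (n → ℝ)
  let T : EuclideanSpace ℝ n →ₗ[ℝ] EuclideanSpace ℝ n :=
    e.symm.toLinearMap ∘ₗ M.mulVecLin ∘ₗ e.toLinearMap
  let W := LinearMap.range T
  obtain ⟨p, hp, q, hq, hw⟩ := W.exists_add_mem_mem_orthogonal (e.symm w)
  have hinner : ∀ u z : EuclideanSpace ℝ n, inner ℝ u z = (e u) ⬝ᵥ (e z) := by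
    intro u z
    rw [EuclideanSpace.inner_eq_star_dotProduct, star_trivial, dotProduct_comm]
    rfl
  have hq0 : Mᵀ *ᵥ (e q) = 0 := by
    have hall : ∀ u : n → ℝ, u ⬝ᵥ (Mᵀ *ᵥ (e q)) = 0 := by
      intro u
      have hWu : T (e.symm u) ∈ W := LinearMap.mem_range_self _ _
      have := hq _ hWu
      rw [hinner] at this
      have hTe : e (T (e.symm u)) = M *ᵥ u := rfl
      rw [hTe] at this
      calc u ⬝ᵥ (Mᵀ *ᵥ (e q)) = u ᵥ* Mᵀ ⬝ᵥ (e q) := Matrix.dotProduct_mulVec u Mᵀ (e q)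
        _ = (M *ᵥ u) ⬝ᵥ (e q) := by rw [Matrix.vecMul_transpose]
        _ = 0 := this
    have := hall (Mᵀ *ᵥ (e q))
    exact (dotProduct_self_eq_zero).mp this
  have hwq : w ⬝ᵥ (e q) = 0 := H _ hq0
  have hpq : inner ℝ p q = 0 := hq p hp
  have hq' : q = 0 := by
    have h1 : inner ℝ q q = 0 := by
      have : inner ℝ (e.symm w) q = inner ℝ p q + inner ℝ q q := by
        rw [hw]; exact inner_add_left p q q
      rw [hpq, zero_add] at this
      rw [← this, hinner]
      have : e (e.symm w) = w := e.apply_symm_apply w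
      rw [this, hwq]
    exact inner_self_eq_zero.mp h1
  rw [hq', add_zero] at hw
  have hpW : e.symm w ∈ W := hw ▸ hp
  obtain ⟨u, hu⟩ := hpW
  refine ⟨e u, ?_⟩
  have : e (T u) = M *ᵥ (e u) := rfl
  rw [← this, hu, e.apply_symm_apply]

theorem mem_range_L_iff_orthogonal
    (N : ℕ) (hN : 1 < N) (b c : ℝ) (hc : c ≠ 0)
    (A : Matrix (Fin 2) (Fin 2) ℝ) (hA : A = !![0, 1; -c, -b])
    (h : ℕ → Fin 2 → ℝ) (hper : ∀ t : ℕ, h (t + N) = h t) :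
    (∃ x : ℕ → Fin 2 → ℝ, (∀ t : ℕ, x (t + N) = x t) ∧
        ∀ t : ℕ, x (t + 1) - A *ᵥ x t = h t) ↔
      ∀ v : Fin 2 → ℝ, (1 - A ^ N)ᵀ *ᵥ v = 0 →
        ((A ^ N) *ᵥ ∑ i ∈ Finset.range N, ((A⁻¹) ^ (i + 1)) *ᵥ h i) ⬝ᵥ v = 0 := by
  have hdet : IsUnit A.det := by
    rw [hA, Matrix.det_fin_two_of]
    simp [hc, isUnit_iff_ne_zero]
  -- key power identity
  have hpow : ∀ i : ℕ, i < N → A ^ N * (A⁻¹) ^ (i + 1) = A ^ (N - 1 - i) := by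
    intro i hi
    have h1 : N - 1 - i + (i + 1) = N := by omega
    have h2 : A ^ N = A ^ (N - 1 - i) * A ^ (i + 1) := by rw [← pow_add, h1]
    rw [h2, Matrix.inv_pow', mul_assoc,
      Matrix.mul_nonsing_inv _ (by simpa using hdet.pow (i + 1)), mul_one]
  set S := ∑ i ∈ Finset.range N, ((A⁻¹) ^ (i + 1)) *ᵥ h i with hS
  have hK : A ^ N *ᵥ S = ∑ i ∈ Finset.range N, A ^ (N - 1 - i) *ᵥ h i := by
    rw [hS, mulVec_finset_sum]
    refine Finset.sum_congr rfl ?_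
    intro i hi
    rw [Matrix.mulVec_mulVec, hpow i (Finset.mem_range.mp hi)]
  -- solution formula
  have sol : ∀ (x : ℕ → Fin 2 → ℝ), (∀ t, x (t + 1) - A *ᵥ x t = h t) →
      ∀ t, x t = A ^ t *ᵥ x 0 + ∑ i ∈ Finset.range t, A ^ (t - 1 - i) *ᵥ h i := by
    intro x hx t
    induction t with
    | zero => simp
    | succ t ih =>
      have hx' : x (t + 1) = A *ᵥ x t + h t := by
        have := hx t; rw [sub_eq_iff_eq_add] at this; rw [this, add_comm]
      rw [hx', ih, Matrix.mulVec_add, Matrix.mulVec_mulVec, ← pow_succ',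
        Finset.sum_range_succ]
      have hlast : A ^ (t + 1 - 1 - t) *ᵥ h t = h t := by
        simp
      rw [hlast, ← add_assoc]
      have hsum : A *ᵥ ∑ i ∈ Finset.range t, A ^ (t - 1 - i) *ᵥ h i
          = ∑ i ∈ Finset.range t, A ^ (t + 1 - 1 - i) *ᵥ h i := by
        rw [mulVec_finset_sum]
        refine Finset.sum_congr rfl ?_
        intro i hi
        have hi' := Finset.mem_range.mp hi
        rw [Matrix.mulVec_mulVec, ← pow_succ']
        have he : t - 1 - i + 1 = t + 1 - 1 - i := by omega
        rw [he]
      rw [hsum]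
  constructor
  · rintro ⟨x, hxper, hrec⟩ v hv
    have hxN : x N = A ^ N *ᵥ x 0 + A ^ N *ᵥ S := by rw [sol x hrec N, hK]
    have hx0 : x N = x 0 := by simpa using hxper 0
    have hw : (1 - A ^ N) *ᵥ x 0 = A ^ N *ᵥ S := by
      rw [Matrix.sub_mulVec, Matrix.one_mulVec]
      rw [hx0] at hxN
      exact sub_eq_iff_eq_add'.mpr hxN
    rw [← hw]
    calc ((1 - A ^ N) *ᵥ x 0) ⬝ᵥ v = v ⬝ᵥ ((1 - A ^ N) *ᵥ x 0) := by rw [dotProduct_comm]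
      _ = (v ᵥ* (1 - A ^ N)) ⬝ᵥ x 0 := by rw [Matrix.dotProduct_mulVec]
      _ = ((1 - A ^ N)ᵀ *ᵥ v) ⬝ᵥ x 0 := by rw [Matrix.mulVec_transpose]
      _ = 0 := by rw [hv, zero_dotProduct]
  · intro Hv
    obtain ⟨x0, hx0⟩ := surj_of_orth (1 - A ^ N) (A ^ N *ᵥ S) (fun v hv => Hv v hv)
    set x : ℕ → Fin 2 → ℝ := fun t => Nat.rec x0 (fun t xt => A *ᵥ xt + h t) t with hxdef
    have hrec : ∀ t, x (t + 1) - A *ᵥ x t = h t := by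
      intro t; show (A *ᵥ x t + h t) - A *ᵥ x t = h t; abel
    have hxN : x N = x 0 := by
      have h0 : x 0 = x0 := rfl
      rw [sol x hrec N, ← hK, ← hx0, Matrix.sub_mulVec, Matrix.one_mulVec, h0]
      abel
    refine ⟨x, ?_, hrec⟩
    intro t
    induction t with
    | zero => simpa using hxN
    | succ t ih =>
      have : t + 1 + N = (t + N) + 1 := by omega
      rw [this]
      show A *ᵥ x (t + N) + h (t + N) = A *ᵥ x t + h t
      rw [ih, hper]
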